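/- Let A be a finite set, H > 0 a real number, g : A → [0, H] a function, α > 0, and p, p* probability distributions on A with p(a) > 0 for all a. Define q on A by q(a) = p(a)·exp(α·g(a)) / Σ_{a'} p(a')·exp(α·g(a')). Then Σ_a g(a)·(p*(a) − p(a)) ≤ α·H²/2 + (1/α)·[D_KL(p* ‖ p) − D_KL(p* ‖ q)]. -/

import Mathlib

open Finset

/-- Kullback–Leibler divergence between probability mass functions on a finite type. -/
noncomputable def KLdiv {A : Type*} [Fintype A] (p q : A → ℝ) : ℝ :=
  ∑ a, p a * Real.log (p a / q a)

lemma exp_quad_bound (t : ℝ) (ht : t ≤ 0) : Real.exp t ≤ 1 + t + t ^ 2 / 2 := by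
  have hmono : AntitoneOn (fun x : ℝ => 1 + x + x ^ 2 / 2 - Real.exp x) (Set.Iic 0) := by
    apply antitoneOn_of_deriv_nonpos (convex_Iic 0)
    · exact (Continuous.continuousOn (by continuity))
    · intro x hx
      exact ((((differentiable_id.const_add 1).add
        ((differentiable_pow 2).div_const 2)).sub Real.differentiable_exp) x).differentiableWithinAt
    · intro x hx
      have h : HasDerivAt (fun x : ℝ => 1 + x + x ^ 2 / 2 - Real.exp x)
          (1 + x - Real.exp x) x := by
        have h1 : HasDerivAt (fun x : ℝ => 1 + x + x ^ 2 / 2)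
            (0 + 1 + 2 * x / 2) x := by
          have := ((hasDerivAt_id x).const_add (1 : ℝ)).add
            (((hasDerivAt_pow 2 x)).div_const 2)
          exact this.congr_deriv (by norm_num)
        have := h1.sub (Real.hasDerivAt_exp x)
        exact this.congr_deriv (by ring)
      rw [h.deriv]
      nlinarith [Real.add_one_le_exp x]
  have h0 : (0 : ℝ) ∈ Set.Iic (0 : ℝ) := Set.mem_Iic.mpr le_rfl
  have ht' : t ∈ Set.Iic (0 : ℝ) := Set.mem_Iic.mpr ht
  have := hmono ht' h0 ht
  simp at this
  linarith

theorem stmt3 {A : Type*} [Fintype A] (H : ℝ) (hH : 0 < H)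
    (g : A → ℝ) (hg : ∀ a, g a ∈ Set.Icc (0:ℝ) H)
    (α : ℝ) (hα : 0 < α)
    (p pstar : A → ℝ)
    (hp : (∀ a, 0 < p a) ∧ ∑ a, p a = 1)
    (hpstar : (∀ a, 0 ≤ pstar a) ∧ ∑ a, pstar a = 1)
    (q : A → ℝ)
    (hq : ∀ a, q a = p a * Real.exp (α * g a) / ∑ a', p a' * Real.exp (α * g a')) :
    ∑ a, g a * (pstar a - p a) ≤
      α * H^2 / 2 + (1/α) * (KLdiv pstar p - KLdiv pstar q) := by
  set Z := ∑ a', p a' * Real.exp (α * g a') with hZ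
  have hne : (Finset.univ : Finset A).Nonempty := by
    rcases Finset.eq_empty_or_nonempty (Finset.univ : Finset A) with h | h
    · exfalso
      have := hp.2
      rw [h, Finset.sum_empty] at this
      norm_num at this
    · exact h
  have hZpos : 0 < Z := by
    apply Finset.sum_pos _ hne
    intro a _
    exact mul_pos (hp.1 a) (Real.exp_pos _)
  set T := ∑ a, pstar a * g a with hT
  set P := ∑ a, p a * g a with hP
  -- KL difference identity
  have hKL : KLdiv pstar p - KLdiv pstar q = α * T - Real.log Z := by
    unfold KLdiv
    rw [← Finset.sum_sub_distrib]
    have hterm : ∀ a : A, pstar a * Real.log (pstar a / p a)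
        - pstar a * Real.log (pstar a / q a)
        = α * (pstar a * g a) - pstar a * Real.log Z := by
      intro a
      rcases eq_or_lt_of_le (hpstar.1 a) with h | h
      · simp [← h]
      · have hpa := hp.1 a
        have hqa : q a = p a * Real.exp (α * g a) / Z := hq a
        have hqpos : 0 < q a := by rw [hqa]; positivity
        rw [Real.log_div (ne_of_gt h) (ne_of_gt hpa),
          Real.log_div (ne_of_gt h) (ne_of_gt hqpos), hqa,
          Real.log_div (by positivity) (ne_of_gt hZpos),
          Real.log_mul (ne_of_gt hpa) (Real.exp_ne_zero _), Real.log_exp]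
        ring
    rw [Finset.sum_congr rfl (fun a _ => hterm a), Finset.sum_sub_distrib,
      ← Finset.mul_sum, ← Finset.sum_mul, hpstar.2]
    ring
  -- Hoeffding-style bound on log Z
  have hX : Z ≤ Real.exp (α * H) * (1 + α * (P - H) + α ^ 2 * H ^ 2 / 2) := by
    have hstep : ∀ a : A, p a * Real.exp (α * g a)
        ≤ p a * (Real.exp (α * H) * (1 + α * (g a - H) + α ^ 2 * H ^ 2 / 2)) := by
      intro a
      have hga := hg a
      have hga0 : 0 ≤ g a := hga.1
      have hgaH : g a ≤ H := hga.2
      have ht : α * (g a - H) ≤ 0 := by nlinarith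
      have h1 : Real.exp (α * g a) = Real.exp (α * H) * Real.exp (α * (g a - H)) := by
        rw [← Real.exp_add]; ring_nf
      have h2 : Real.exp (α * (g a - H)) ≤ 1 + α * (g a - H) + (α * (g a - H)) ^ 2 / 2 :=
        exp_quad_bound _ ht
      have h3 : (α * (g a - H)) ^ 2 / 2 ≤ α ^ 2 * H ^ 2 / 2 := by
        have hsq : (g a - H) ^ 2 ≤ H ^ 2 := by nlinarith
        have := mul_le_mul_of_nonneg_left hsq (sq_nonneg α)
        nlinarith
      have hpa := (hp.1 a).le
      have hE : (0:ℝ) < Real.exp (α * H) := Real.exp_pos _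
      rw [h1]
      have : Real.exp (α * (g a - H)) ≤ 1 + α * (g a - H) + α ^ 2 * H ^ 2 / 2 := by
        linarith
      exact mul_le_mul_of_nonneg_left (mul_le_mul_of_nonneg_left this hE.le) hpa
    calc Z ≤ ∑ a, p a * (Real.exp (α * H) * (1 + α * (g a - H) + α ^ 2 * H ^ 2 / 2)) :=
          Finset.sum_le_sum (fun a _ => hstep a)
      _ = Real.exp (α * H) * (1 + α * (P - H) + α ^ 2 * H ^ 2 / 2) := by
          have : ∀ a : A, p a * (Real.exp (α * H) * (1 + α * (g a - H) + α ^ 2 * H ^ 2 / 2))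
              = Real.exp (α * H) * ((1 - α * H + α ^ 2 * H ^ 2 / 2) * p a
                + α * (p a * g a)) := fun a => by ring
          rw [Finset.sum_congr rfl (fun a _ => this a), ← Finset.mul_sum]
          rw [Finset.sum_add_distrib, ← Finset.mul_sum, ← Finset.mul_sum, hp.2, hP]
          ring
  have hXpos : 0 < 1 + α * (P - H) + α ^ 2 * H ^ 2 / 2 := by
    have hE : (0:ℝ) < Real.exp (α * H) := Real.exp_pos _
    nlinarith
  have hlogZ : Real.log Z ≤ α * P + α ^ 2 * H ^ 2 / 2 := by
    have h1 : Real.log Z ≤ Real.log (Real.exp (α * H) * (1 + α * (P - H) + α ^ 2 * H ^ 2 / 2)) :=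
      Real.log_le_log hZpos hX
    rw [Real.log_mul (Real.exp_ne_zero _) (ne_of_gt hXpos), Real.log_exp] at h1
    have h2 : Real.log (1 + α * (P - H) + α ^ 2 * H ^ 2 / 2)
        ≤ (1 + α * (P - H) + α ^ 2 * H ^ 2 / 2) - 1 :=
      Real.log_le_sub_one_of_pos hXpos
    linarith
  -- finish
  have hsum : ∑ a, g a * (pstar a - p a) = T - P := by
    rw [hT, hP, ← Finset.sum_sub_distrib]
    apply Finset.sum_congr rfl
    intro a _
    ring
  rw [hKL, hsum]
  have h3 : (1/α) * (α * T - Real.log Z) = T - Real.log Z / α := by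
    field_simp
  rw [h3]
  have h4 : Real.log Z / α ≤ P + α * H ^ 2 / 2 := by
    rw [div_le_iff₀ hα]
    nlinarith
  linarith
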